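/- Consistency of the doubly robust functional under nuisance convergence: suppose sequences of functions g_n : 𝒳 → ℝ, e_n : 𝒳 → [δ, 1], p_n : 𝒳 → [δ, 1 − δ] converge pointwise on the (finite) support of X to limits g*, e*, p*, and that either (i) g*(x) = E[Y | X = x, A = a, R = true] for all x in the support of X, or (ii) p*(x) = ℙ(R = true | X = x) and e*(x) = ℙ(A = a | X = x, R = true) for all x in the support of X. Then Φ(g_n, e_n, p_n) → ψ as n → ∞, where ψ := Σ_x ℙ(X = x | R = false)·E[Y | X = x, A = a, R = true] and Φ(g, e, p) := (1/ℙ(R = false))·E[ ((1 − p(X))·1{R = true, A = a}/(e(X)·p(X)))·(Y − g(X)) + 1{R = false}·g(X) ]. -/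

import Mathlib

open Finset

attribute [local instance] Classical.propDecidable

variable {Ω : Type*}

/-- Probability of an event. -/
noncomputable def pr [Fintype Ω] (P : Ω → ℝ) (E : Ω → Prop) : ℝ :=
  ∑ ω, if E ω then P ω else 0

/-- Expectation of a real random variable. -/
noncomputable def ex [Fintype Ω] (P : Ω → ℝ) (Z : Ω → ℝ) : ℝ :=
  ∑ ω, P ω * Z ω

/-- Conditional probability ℙ(F | E) = ℙ(F ∩ E)/ℙ(E). -/
noncomputable def cpr [Fintype Ω] (P : Ω → ℝ) (F E : Ω → Prop) : ℝ :=
  pr P (fun ω => F ω ∧ E ω) / pr P E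

/-- Conditional expectation E[Z | E] = E[Z·1_E]/ℙ(E). -/
noncomputable def cex [Fintype Ω] (P : Ω → ℝ) (Z : Ω → ℝ) (E : Ω → Prop) : ℝ :=
  (∑ ω, if E ω then P ω * Z ω else 0) / pr P E

open Filter Topology

lemma pr_congr [Fintype Ω] (P : Ω → ℝ) (E F : Ω → Prop) (h : ∀ ω, E ω ↔ F ω) :
    pr P E = pr P F := by
  unfold pr; apply Finset.sum_congr rfl; intro ω _; simp [h ω]

lemma pr_nonneg [Fintype Ω] (P : Ω → ℝ) (hP0 : ∀ ω, 0 ≤ P ω) (E : Ω → Prop) :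
    0 ≤ pr P E := by
  apply Finset.sum_nonneg; intro ω _; split <;> simp [hP0 ω]

lemma pr_zero_imp [Fintype Ω] (P : Ω → ℝ) (hP0 : ∀ ω, 0 ≤ P ω) (E : Ω → Prop)
    (h : pr P E = 0) : ∀ ω, E ω → P ω = 0 := by
  intro ω hE
  have := (Finset.sum_eq_zero_iff_of_nonneg
    (by intro i _; split <;> simp [hP0 i])).1 h ω (Finset.mem_univ ω)
  simpa [hE] using this

lemma pr_pos_of [Fintype Ω] (P : Ω → ℝ) (hP0 : ∀ ω, 0 ≤ P ω) (E : Ω → Prop)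
    (ω : Ω) (hω : 0 < P ω) (hE : E ω) : 0 < pr P E := by
  have h1 : (if E ω then P ω else 0) ≤ pr P E := by
    apply Finset.single_le_sum (f := fun i => if E i then P i else 0)
      (fun i _ => by split <;> simp [hP0 i]) (Finset.mem_univ ω)
  rw [if_pos hE] at h1
  linarith

lemma pr_mono [Fintype Ω] (P : Ω → ℝ) (hP0 : ∀ ω, 0 ≤ P ω) (E F : Ω → Prop)
    (h : ∀ ω, E ω → F ω) : pr P E ≤ pr P F := by
  apply Finset.sum_le_sum; intro ω _
  by_cases hE : E ω
  · simp [hE, h ω hE]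
  · simp [hE]; split <;> simp [hP0 ω]

/-- Consistency of the doubly robust functional under pointwise
convergence of the nuisance functions, when one of the two limits is correctly
specified. -/
theorem doubly_robust_consistency
    {𝒳 𝒯 : Type*} [Fintype Ω] [Fintype 𝒳] [Fintype 𝒯]
    (P : Ω → ℝ) (hP0 : ∀ ω, 0 ≤ P ω) (hP1 : ∑ ω, P ω = 1)
    (X : Ω → 𝒳) (A : Ω → 𝒯) (Y : Ω → ℝ) (R : Ω → Bool) (a : 𝒯)
    (δ : ℝ) (hδ0 : 0 < δ) (hδhalf : δ ≤ 1 / 2)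
    -- positivity
    (hposT : 0 < pr P (fun ω => R ω = false))
    (hpos : ∀ x, 0 < pr P (fun ω => X ω = x) →
      0 < pr P (fun ω => A ω = a ∧ X ω = x ∧ R ω = true))
    -- sequences of nuisance functions and their ranges
    (g : ℕ → 𝒳 → ℝ) (e : ℕ → 𝒳 → ℝ) (p : ℕ → 𝒳 → ℝ)
    (he_rng : ∀ n x, δ ≤ e n x ∧ e n x ≤ 1)
    (hp_rng : ∀ n x, δ ≤ p n x ∧ p n x ≤ 1 - δ)
    -- pointwise convergence on the support of X
    (gstar estar pstar : 𝒳 → ℝ)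
    (hgconv : ∀ x, 0 < pr P (fun ω => X ω = x) →
      Tendsto (fun n => g n x) atTop (𝓝 (gstar x)))
    (heconv : ∀ x, 0 < pr P (fun ω => X ω = x) →
      Tendsto (fun n => e n x) atTop (𝓝 (estar x)))
    (hpconv : ∀ x, 0 < pr P (fun ω => X ω = x) →
      Tendsto (fun n => p n x) atTop (𝓝 (pstar x)))
    -- one of the two limits is correctly specified
    (hdr :
      (∀ x, 0 < pr P (fun ω => X ω = x) →
        gstar x = cex P Y (fun ω => X ω = x ∧ A ω = a ∧ R ω = true))
      ∨ ((∀ x, 0 < pr P (fun ω => X ω = x) →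
            pstar x = cpr P (fun ω => R ω = true) (fun ω => X ω = x))
          ∧ (∀ x, 0 < pr P (fun ω => X ω = x) →
            estar x = cpr P (fun ω => A ω = a) (fun ω => X ω = x ∧ R ω = true)))) :
    Tendsto
      (fun n =>
        (pr P (fun ω => R ω = false))⁻¹
          * ex P (fun ω =>
              ((1 - p n (X ω)) * (if R ω = true ∧ A ω = a then (1 : ℝ) else 0)
                  / (e n (X ω) * p n (X ω)))
                * (Y ω - g n (X ω))
              + (if R ω = false then (1 : ℝ) else 0) * g n (X ω)))
      atTop
      (𝓝 (∑ x, cpr P (fun ω => X ω = x) (fun ω => R ω = false)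
            * cex P Y (fun ω => X ω = x ∧ A ω = a ∧ R ω = true))) := by
  classical
  set T : Ω → ℝ := fun ω =>
      P ω * (((1 - pstar (X ω)) * (if R ω = true ∧ A ω = a then (1 : ℝ) else 0)
                  / (estar (X ω) * pstar (X ω)))
                * (Y ω - gstar (X ω))
              + (if R ω = false then (1 : ℝ) else 0) * gstar (X ω)) with hT
  -- Step 1 : convergence of the expectation
  have hsum : Tendsto
      (fun n => ∑ ω, P ω *
          (((1 - p n (X ω)) * (if R ω = true ∧ A ω = a then (1 : ℝ) else 0)
              / (e n (X ω) * p n (X ω))) * (Y ω - g n (X ω))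
            + (if R ω = false then (1 : ℝ) else 0) * g n (X ω)))
      atTop (𝓝 (∑ ω, T ω)) := by
    apply tendsto_finset_sum
    intro ω _
    by_cases hω : P ω = 0
    · simp only [hT, hω, zero_mul]
      exact tendsto_const_nhds
    · have hPω : 0 < P ω := lt_of_le_of_ne (hP0 ω) (Ne.symm hω)
      have hx : 0 < pr P (fun ω' => X ω' = X ω) := pr_pos_of P hP0 _ ω hPω rfl
      have hg := hgconv _ hx
      have he := heconv _ hx
      have hp := hpconv _ hx
      have heδ : δ ≤ estar (X ω) := ge_of_tendsto' he (fun n => (he_rng n (X ω)).1)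
      have hpδ : δ ≤ pstar (X ω) := ge_of_tendsto' hp (fun n => (hp_rng n (X ω)).1)
      have hden : estar (X ω) * pstar (X ω) ≠ 0 :=
        ne_of_gt (mul_pos (lt_of_lt_of_le hδ0 heδ) (lt_of_lt_of_le hδ0 hpδ))
      exact Tendsto.const_mul (P ω)
        (((((tendsto_const_nhds.sub hp).mul tendsto_const_nhds).div
            (he.mul hp) hden).mul (tendsto_const_nhds.sub hg)).add
          (Tendsto.const_mul _ hg))
  -- Step 2 : identify the limit
  have hxkey : ∀ x : 𝒳, (∑ ω, if X ω = x then T ω else 0)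
      = pr P (fun ω => X ω = x ∧ R ω = false)
        * cex P Y (fun ω => X ω = x ∧ A ω = a ∧ R ω = true) := by
    intro x
    by_cases hq : 0 < pr P (fun ω => X ω = x)
    · have hs : 0 < pr P (fun ω => X ω = x ∧ A ω = a ∧ R ω = true) := by
        have h0 := hpos x hq
        rwa [pr_congr P _ (fun ω => X ω = x ∧ A ω = a ∧ R ω = true)
          (fun ω => by tauto)] at h0
      set c : ℝ := (1 - pstar x) / (estar x * pstar x) with hc
      have hsplit : (∑ ω, if X ω = x then T ω else 0)
          = c * ((∑ ω, if X ω = x ∧ A ω = a ∧ R ω = true then P ω * Y ω else 0)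
              - gstar x * pr P (fun ω => X ω = x ∧ A ω = a ∧ R ω = true))
            + gstar x * pr P (fun ω => X ω = x ∧ R ω = false) := by
        simp only [pr, Finset.mul_sum, ← Finset.sum_sub_distrib, ← Finset.sum_add_distrib]
        apply Finset.sum_congr rfl
        intro ω _
        by_cases hX : X ω = x
        · subst hX
          rcases Bool.eq_false_or_eq_true (R ω) with hR | hR <;>
            by_cases hA : A ω = a <;>
              simp [hT, hR, hA, hc] <;> ring
        · simp [hX]
      rw [hsplit]
      -- abbreviations
      set U : ℝ := ∑ ω, if X ω = x ∧ A ω = a ∧ R ω = true then P ω * Y ω else 0 with hU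
      set s : ℝ := pr P (fun ω => X ω = x ∧ A ω = a ∧ R ω = true) with hsdef
      set t2 : ℝ := pr P (fun ω => X ω = x ∧ R ω = false) with ht2
      have hcex : cex P Y (fun ω => X ω = x ∧ A ω = a ∧ R ω = true) = U / s := by
        rw [hU, hsdef]
        simp only [cex]
        congr 1
        apply Finset.sum_congr rfl
        intro ω _
        by_cases h : X ω = x ∧ A ω = a ∧ R ω = true <;> simp [h]
      have hsne : s ≠ 0 := ne_of_gt hs
      rcases hdr with hgood | ⟨hpgood, hegood⟩
      · have hgx : gstar x = U / s := by rw [hgood x hq, hcex]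
        rw [hgx, hcex]
        field_simp
        ring
      · -- outcome-model-free case
        set q : ℝ := pr P (fun ω => X ω = x) with hqdef
        set r : ℝ := pr P (fun ω => X ω = x ∧ R ω = true) with hrdef
        have hsr : s ≤ r := pr_mono P hP0 _ _ (fun ω h => ⟨h.1, h.2.2⟩)
        have hr : 0 < r := lt_of_lt_of_le hs hsr
        have hqsum : q = r + t2 := by
          rw [hqdef, hrdef, ht2, pr, pr, pr, ← Finset.sum_add_distrib]
          apply Finset.sum_congr rfl
          intro ω _
          rcases Bool.eq_false_or_eq_true (R ω) with hR | hR <;>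
            by_cases hX : X ω = x <;> simp [hR, hX]
        have hpx : pstar x = r / q := by
          rw [hpgood x hq, cpr, hrdef, hqdef,
            pr_congr P (fun ω => R ω = true ∧ X ω = x)
              (fun ω => X ω = x ∧ R ω = true) (fun ω => by tauto)]
        have hex : estar x = s / r := by
          rw [hegood x hq, cpr, hsdef, hrdef,
            pr_congr P (fun ω => A ω = a ∧ X ω = x ∧ R ω = true)
              (fun ω => X ω = x ∧ A ω = a ∧ R ω = true) (fun ω => by tauto)]
        have hqne : q ≠ 0 := ne_of_gt hq
        have hrne : r ≠ 0 := ne_of_gt hr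
        rw [hcex, hc, hpx, hex]
        have ht2q : 1 - r / q = t2 / q := by
          field_simp
          linarith
        have hden : (s / r) * (r / q) = s / q := by
          field_simp
        have hcc : (1 - r / q) / ((s / r) * (r / q)) = t2 / s := by
          rw [ht2q, hden, div_div_div_eq]
          rw [mul_comm q s]
          rw [mul_div_mul_right _ _ hqne]
        rw [hcc]
        field_simp
        ring
    · -- off the support of X
      have hq0 : pr P (fun ω => X ω = x) = 0 :=
        le_antisymm (not_lt.1 hq) (pr_nonneg P hP0 _)
      have hzero : ∀ ω, X ω = x → P ω = 0 :=
        pr_zero_imp P hP0 _ hq0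
      have hL : (∑ ω, if X ω = x then T ω else 0) = 0 := by
        apply Finset.sum_eq_zero
        intro ω _
        by_cases hX : X ω = x
        · simp [hX, hT, hzero ω hX]
        · simp [hX]
      have ht20 : pr P (fun ω => X ω = x ∧ R ω = false) = 0 :=
        le_antisymm
          (by
            have := pr_mono P hP0 (fun ω => X ω = x ∧ R ω = false)
              (fun ω => X ω = x) (fun ω h => h.1)
            linarith [this, hq0])
          (pr_nonneg P hP0 _)
      rw [hL, ht20, zero_mul]
  -- Step 3 : assemble
  have hswap : (∑ ω, T ω) = ∑ x, ∑ ω, if X ω = x then T ω else 0 := by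
    rw [Finset.sum_comm]
    apply Finset.sum_congr rfl
    intro ω _
    simp
  have hlim : (∑ x, cpr P (fun ω => X ω = x) (fun ω => R ω = false)
        * cex P Y (fun ω => X ω = x ∧ A ω = a ∧ R ω = true))
      = (pr P (fun ω => R ω = false))⁻¹ * ∑ ω, T ω := by
    rw [hswap, Finset.mul_sum]
    apply Finset.sum_congr rfl
    intro x _
    rw [hxkey x, cpr, div_eq_mul_inv]
    ring
  rw [hlim]
  simp only [ex]
  exact hsum.const_mul _
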